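/- Under the hypotheses of the 2-block theorem—H1^T H1 = ‖h‖²·I, H2^T H2 = ‖h‖²·I, QR decomposition H = [H1 H2] = QR with R = [[R1,E],[0,R2]], R1 = ‖h‖·I—we have R2^T R2 = ‖h‖²·I − E^T E; hence if E^T E is diagonal then R2 is diagonal. -/

import Mathlib

open Matrix

/-- Under the 2-block theorem hypotheses — H1ᵀH1 = ‖h‖²I,
H2ᵀH2 = ‖h‖²I, QR decomposition [H1 H2] = [Q1 Q2]·[[R1,E],[0,R2]] with
Q orthonormal, R upper triangular with positive diagonal, R1 = ‖h‖I,
Q1 = (1/‖h‖)H1, E = Q1ᵀH2 — we have R2ᵀR2 = ‖h‖²I − EᵀE; hence if EᵀE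
is diagonal then R2 is diagonal. -/
theorem stmt15 {m n k : ℕ} (h : Fin n → ℝ) (hne : h ≠ 0)
    (H1 H2 Q1 Q2 : Matrix (Fin m) (Fin k) ℝ)
    (R1 E R2 : Matrix (Fin k) (Fin k) ℝ)
    (nh : ℝ) (hnh : nh = ‖(EuclideanSpace.equiv (Fin n) ℝ).symm h‖)
    (hH1 : H1ᵀ * H1 = (nh ^ 2) • (1 : Matrix (Fin k) (Fin k) ℝ))
    (hH2 : H2ᵀ * H2 = (nh ^ 2) • (1 : Matrix (Fin k) (Fin k) ℝ))
    (hrank : (Matrix.fromCols H1 H2).rank = k + k)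
    (hQR : Matrix.fromCols H1 H2 =
      Matrix.fromCols Q1 Q2 * Matrix.fromBlocks R1 E 0 R2)
    (hQ : (Matrix.fromCols Q1 Q2)ᵀ * Matrix.fromCols Q1 Q2 = 1)
    (hTri : (Matrix.fromBlocks R1 E 0 R2).BlockTriangular
      (Sum.elim (fun i : Fin k => (i : ℕ)) (fun j : Fin k => k + (j : ℕ))))
    (hPos : ∀ i, 0 < Matrix.fromBlocks R1 E 0 R2 i i)
    (hR1 : R1 = nh • (1 : Matrix (Fin k) (Fin k) ℝ))
    (hQ1 : Q1 = nh⁻¹ • H1)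
    (hE : E = Q1ᵀ * H2) :
    R2ᵀ * R2 = (nh ^ 2) • (1 : Matrix (Fin k) (Fin k) ℝ) - Eᵀ * E ∧
      ((Eᵀ * E).IsDiag → R2.IsDiag) := by
  have key : (Matrix.fromCols H1 H2)ᵀ * Matrix.fromCols H1 H2 =
      (Matrix.fromBlocks R1 E 0 R2)ᵀ * (Matrix.fromBlocks R1 E 0 R2) := by
    rw [hQR, Matrix.transpose_mul, Matrix.mul_assoc, ← Matrix.mul_assoc
      (Matrix.fromCols Q1 Q2)ᵀ, hQ, Matrix.one_mul]
  rw [Matrix.transpose_fromCols, Matrix.fromRows_mul_fromCols,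
    Matrix.fromBlocks_transpose, Matrix.fromBlocks_multiply] at key
  have key22 := congrArg Matrix.toBlocks₂₂ key
  simp only [Matrix.toBlocks_fromBlocks₂₂] at key22
  have part1 : R2ᵀ * R2 = (nh ^ 2) • (1 : Matrix (Fin k) (Fin k) ℝ) - Eᵀ * E := by
    rw [← hH2, key22]
    simp [Matrix.mul_zero, Matrix.zero_mul]
  refine ⟨part1, ?_⟩
  intro hdiag
  have hD : (R2ᵀ * R2).IsDiag := by
    rw [part1]
    intro i j hij
    simp [Matrix.sub_apply, Matrix.smul_apply, Matrix.one_apply_ne hij, hdiag hij]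
  have htri : ∀ i j : Fin k, j < i → R2 i j = 0 := by
    intro i j hji
    have := hTri (i := Sum.inr i) (j := Sum.inr j) (by simpa using hji)
    simpa using this
  have hpos : ∀ i : Fin k, 0 < R2 i i := fun i => by simpa using hPos (Sum.inr i)
  have upper : ∀ (N : ℕ) (i j : Fin k), (i : ℕ) = N → i < j → R2 i j = 0 := by
    intro N
    induction N using Nat.strong_induction_on with
    | _ N IHN =>
      intro i j hiN hij
      have IH : ∀ l : Fin k, l < i → ∀ j : Fin k, l < j → R2 l j = 0 := by
        intro l hl j' hlj'
        exact IHN (l : ℕ) (by rw [← hiN]; exact hl) l j' rfl hlj'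
      have h0 : (R2ᵀ * R2) i j = 0 := hD (ne_of_lt hij)
      rw [Matrix.mul_apply] at h0
      have hsum : ∑ l, R2ᵀ i l * R2 l j = R2 i i * R2 i j := by
        refine Finset.sum_eq_single i ?_ (by simp)
        intro l _ hl
        rcases lt_or_gt_of_ne hl with hlt | hgt
        · rw [Matrix.transpose_apply, IH l hlt j (lt_trans hlt hij), mul_zero]
        · rw [Matrix.transpose_apply, htri l i hgt, zero_mul]
      rw [hsum] at h0
      exact (mul_eq_zero.mp h0).resolve_left (ne_of_gt (hpos i))
  intro i j hij
  rcases lt_or_gt_of_ne hij with hlt | hgt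
  · exact upper (i : ℕ) i j rfl hlt
  · exact htri i j hgt
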